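/- If λ ∈ ℂ is nonzero and K(λ) = λ²M + λC + K is invertible, then A − λI is invertible and (A − λI)^{-1} equals the block matrix [[−(1/λ)I + (1/λ)K^{1/2}K(λ)^{-1}K^{1/2}, −K^{1/2}K(λ)^{-1}M^{1/2}], [M^{1/2}K(λ)^{-1}K^{1/2}, −λM^{1/2}K(λ)^{-1}M^{1/2}]]. -/

import Mathlib

open Matrix
open scoped ComplexOrder

noncomputable section

/-- The value `x* P x` (which is real for Hermitian `P`), taken as its real part. -/
def qf {n : ℕ} (P : Matrix (Fin n) (Fin n) ℂ) (x : Fin n → ℂ) : ℝ :=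
  (star x ⬝ᵥ P.mulVec x).re

/-- The (positive semidefinite) square root of a positive semidefinite matrix,
extended by `0` to all matrices. -/
def msqrt {n : ℕ} (P : Matrix (Fin n) (Fin n) ℂ) : Matrix (Fin n) (Fin n) ℂ :=
  open scoped Classical in
  if h : P.PosSemidef then
    h.1.eigenvectorUnitary.1 * diagonal ((↑) ∘ (√·) ∘ h.1.eigenvalues : Fin n → ℂ) *
      (star h.1.eigenvectorUnitary : Matrix (Fin n) (Fin n) ℂ)
  else 0

/-- The quadratic matrix pencil `K(λ) = λ²M + λC + K`. -/
def Kpen {n : ℕ} (M C K : Matrix (Fin n) (Fin n) ℂ) (lam : ℂ) :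
    Matrix (Fin n) (Fin n) ℂ :=
  lam ^ 2 • M + lam • C + K

/-- The real part of the `+`-root of the scalar quadratic
`m(x) λ² + c(x) λ + k(x) = 0`. -/
def rfun {n : ℕ} (M C K : Matrix (Fin n) (Fin n) ℂ) (x : Fin n → ℂ) : ℝ :=
  open scoped Classical in
  if (qf C x) ^ 2 ≥ 4 * qf M x * qf K x then
    (-(qf C x) + Real.sqrt ((qf C x) ^ 2 - 4 * qf M x * qf K x)) / (2 * qf M x)
  else
    -(qf C x) / (2 * qf M x)

/-- The spectral-shift bound `γ = sup_{x ≠ 0} Re p₊(x)`. -/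
def gam {n : ℕ} (M C K : Matrix (Fin n) (Fin n) ℂ) : ℝ :=
  sSup {y : ℝ | ∃ x : Fin n → ℂ, x ≠ 0 ∧ rfun M C K x = y}

/-- The phase-space matrix `A = [[0, K½ M⁻½], [−M⁻½ K½, −M⁻½ C M⁻½]]`. -/
def phaseA {n : ℕ} (M C K : Matrix (Fin n) (Fin n) ℂ) :
    Matrix (Fin n ⊕ Fin n) (Fin n ⊕ Fin n) ℂ :=
  fromBlocks 0 (msqrt K * (msqrt M)⁻¹)
    (-((msqrt M)⁻¹ * msqrt K)) (-((msqrt M)⁻¹ * C * (msqrt M)⁻¹))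

/-- The operator norm of a matrix with respect to the Euclidean norm. -/
def opNorm {m : Type*} [Fintype m] [DecidableEq m] (A : Matrix m m ℂ) : ℝ :=
  ‖toEuclideanCLM (𝕜 := ℂ) A‖

/-- The block matrix `L(μ) = [[K½ K(μ)⁻½, 0], [μ M½ K(μ)⁻½, I]]`. -/
def Lmat {n : ℕ} (M C K : Matrix (Fin n) (Fin n) ℂ) (mu : ℝ) :
    Matrix (Fin n ⊕ Fin n) (Fin n ⊕ Fin n) ℂ :=
  fromBlocks (msqrt K * (msqrt (Kpen M C K (mu : ℂ)))⁻¹) 0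
    ((mu : ℂ) • (msqrt M * (msqrt (Kpen M C K (mu : ℂ)))⁻¹)) 1

lemma msqrt_mul_self {n : ℕ} {P : Matrix (Fin n) (Fin n) ℂ} (hP : P.PosDef) :
    msqrt P * msqrt P = P := by
  rw [msqrt, dif_pos hP.posSemidef]
  have hA := hP.posSemidef.1
  have hU : (star hA.eigenvectorUnitary : Matrix (Fin n) (Fin n) ℂ) *
      hA.eigenvectorUnitary.1 = 1 := Unitary.coe_star_mul_self _
  have hD : diagonal ((↑) ∘ (√·) ∘ hA.eigenvalues : Fin n → ℂ) *
      diagonal ((↑) ∘ (√·) ∘ hA.eigenvalues : Fin n → ℂ) =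
      diagonal (RCLike.ofReal ∘ hA.eigenvalues) := by
    rw [diagonal_mul_diagonal]
    congr 1
    funext i
    simp only [Function.comp_apply]
    rw [← Complex.ofReal_mul, Real.mul_self_sqrt (hP.posSemidef.eigenvalues_nonneg i)]
    rfl
  conv_rhs => rw [hA.spectral_theorem]
  rw [Unitary.conjStarAlgAut_apply]
  simp only [Matrix.mul_assoc]
  rw [← Matrix.mul_assoc _ hA.eigenvectorUnitary.1, hU, Matrix.one_mul,
    ← Matrix.mul_assoc (diagonal _) (diagonal _), hD]

lemma msqrt_isUnit {n : ℕ} {P : Matrix (Fin n) (Fin n) ℂ} (hP : P.PosDef) :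
    IsUnit (msqrt P) := by
  rw [Matrix.isUnit_iff_isUnit_det]
  have h : IsUnit ((msqrt P) * (msqrt P)).det := by
    rw [msqrt_mul_self hP]; exact (Matrix.isUnit_iff_isUnit_det _).1 hP.isUnit
  rw [Matrix.det_mul] at h
  exact isUnit_of_mul_isUnit_left h

/-- If `λ ≠ 0` and `K(λ)` is invertible, then `A − λI` is invertible with the
explicit block resolvent formula. -/
theorem resolvent_formula {n : ℕ} (hn : 1 ≤ n)
    (M C K : Matrix (Fin n) (Fin n) ℂ)
    (hM : M.PosDef) (hC : C.PosDef) (hK : K.PosDef)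
    (lam : ℂ) (hlam : lam ≠ 0) (hKlam : IsUnit (Kpen M C K lam)) :
    IsUnit (phaseA M C K - lam • 1) ∧
      (phaseA M C K - lam • 1)⁻¹ =
        fromBlocks
          (-(1 / lam) • 1 + (1 / lam) • (msqrt K * (Kpen M C K lam)⁻¹ * msqrt K))
          (-(msqrt K * (Kpen M C K lam)⁻¹ * msqrt M))
          (msqrt M * (Kpen M C K lam)⁻¹ * msqrt K)
          (-lam • (msqrt M * (Kpen M C K lam)⁻¹ * msqrt M)) := by
  set S := msqrt M with hSdef
  set T := msqrt K with hTdef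
  set P := Kpen M C K lam with hPdef
  have hS2 : S * S = M := msqrt_mul_self hM
  have hT2 : T * T = K := msqrt_mul_self hK
  have hSu : IsUnit S := msqrt_isUnit hM
  have hSi : S * S⁻¹ = 1 := mul_nonsing_inv _ ((isUnit_iff_isUnit_det _).1 hSu)
  have hSi' : S⁻¹ * S = 1 := nonsing_inv_mul _ ((isUnit_iff_isUnit_det _).1 hSu)
  have hPi : P * P⁻¹ = 1 := mul_nonsing_inv _ ((isUnit_iff_isUnit_det _).1 hKlam)
  -- expansion of P * P⁻¹ = 1
  have hPsum : lam ^ 2 • (M * P⁻¹) + lam • (C * P⁻¹) + K * P⁻¹ = 1 := by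
    have hid : lam ^ 2 • M + lam • C + K = P := rfl
    rw [← smul_mul_assoc, ← smul_mul_assoc, ← add_mul, ← add_mul, hid, hPi]
  set B := fromBlocks
          (-(1 / lam) • 1 + (1 / lam) • (T * P⁻¹ * T))
          (-(T * P⁻¹ * S))
          (S * P⁻¹ * T)
          (-lam • (S * P⁻¹ * S)) with hBdef
  have h1 : (lam • (1 : Matrix (Fin n ⊕ Fin n) (Fin n ⊕ Fin n) ℂ)) =
      fromBlocks (lam • 1) 0 0 (lam • 1) := by
    rw [← fromBlocks_one, fromBlocks_smul, smul_zero]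
  have key : (phaseA M C K - lam • 1) * B = 1 := by
    rw [phaseA, ← hSdef, ← hTdef, h1, hBdef, sub_eq_add_neg, fromBlocks_neg,
      fromBlocks_add, fromBlocks_multiply, ← fromBlocks_one]
    have hSc : ∀ X : Matrix (Fin n) (Fin n) ℂ, S⁻¹ * (S * X) = X := by
      intro X; rw [← Matrix.mul_assoc, hSi', Matrix.one_mul]
    rw [fromBlocks_inj]
    have hSc : ∀ X : Matrix (Fin n) (Fin n) ℂ, S⁻¹ * (S * X) = X := by
      intro X; rw [← Matrix.mul_assoc, hSi', Matrix.one_mul]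
    refine ⟨?_, ?_, ?_, ?_⟩ <;>
      simp only [Matrix.mul_assoc, add_zero, zero_add, neg_zero, neg_mul, mul_neg,
        mul_add, add_mul, Matrix.smul_mul, Matrix.mul_smul, Matrix.one_mul,
        Matrix.mul_one, smul_smul, smul_add, smul_neg, neg_smul, neg_neg, neg_add, hSc]
    · rw [one_div_mul_cancel hlam, one_smul, one_smul]; abel
    · abel
    · have hcomb : lam ^ 2 • (S⁻¹ * (M * (P⁻¹ * T))) + lam • (S⁻¹ * (C * (P⁻¹ * T)))
          + S⁻¹ * (K * (P⁻¹ * T)) = S⁻¹ * T := by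
        have := congrArg (fun X => S⁻¹ * (X * T)) hPsum
        simpa [Matrix.add_mul, Matrix.mul_add, Matrix.smul_mul, Matrix.mul_smul,
          Matrix.mul_assoc, Matrix.one_mul, mul_add, smul_add] using this
      have e1 : T * (T * (P⁻¹ * T)) = K * (P⁻¹ * T) := by
        rw [← Matrix.mul_assoc, hT2]
      have e2 : S * (P⁻¹ * T) = S⁻¹ * (M * (P⁻¹ * T)) := by
        rw [← hS2, Matrix.mul_assoc, hSc]
      rw [e1, e2, ← hcomb]
      match_scalars <;> field_simp <;> ring
    · have hcomb : lam ^ 2 • (S⁻¹ * (M * (P⁻¹ * S))) + lam • (S⁻¹ * (C * (P⁻¹ * S)))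
          + S⁻¹ * (K * (P⁻¹ * S)) = 1 := by
        have := congrArg (fun X => S⁻¹ * (X * S)) hPsum
        simpa [Matrix.add_mul, Matrix.mul_add, Matrix.smul_mul, Matrix.mul_smul,
          Matrix.mul_assoc, Matrix.one_mul, mul_add, smul_add, hSi'] using this
      have e1 : T * (T * (P⁻¹ * S)) = K * (P⁻¹ * S) := by
        rw [← Matrix.mul_assoc, hT2]
      have e2 : S * (P⁻¹ * S) = S⁻¹ * (M * (P⁻¹ * S)) := by
        rw [← hS2, Matrix.mul_assoc, hSc]
      rw [e1, e2, ← hcomb]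
      match_scalars <;> field_simp <;> ring
  refine ⟨(isUnit_iff_isUnit_det _).2 (isUnit_det_of_right_inverse key), ?_⟩
  exact inv_eq_right_inv key


end
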